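/- (Mixed second-moment identity for uniformly sampled target sets.) Fix n ≥ 1, a bit string k : Fin n → Bool, and naturals d₁, d₂, t with 1 ≤ d₁ ≤ n, 1 ≤ d₂ ≤ n, d₁ ≠ d₂, and t ≥ 3. Then the sum, over all finite sets T of bit strings (Fin n → Bool) with |T| = t and k ∈ T, of the product |{z ∈ T | hammingDist z k = d₁}| * |{z ∈ T | hammingDist z k = d₂}| equals (n.choose d₁) * (n.choose d₂) * (2^n − 3).choose (t − 3). -/

import Mathlib

open Finset

lemma card_filter_superset_aux {α : Type*} [Fintype α] [DecidableEq α] (S : Finset α) (t : ℕ)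
    (hS : S.card ≤ t) :
    (Finset.univ.filter (fun T : Finset α => T.card = t ∧ S ⊆ T)).card
      = (Fintype.card α - S.card).choose (t - S.card) := by
  rw [← Finset.card_compl S, ← Finset.card_powersetCard]
  refine Finset.card_nbij' (fun T => T \ S) (fun U => U ∪ S) ?_ ?_ ?_ ?_
  · intro T hT
    simp only [mem_coe, mem_filter, mem_univ, true_and] at hT
    rw [Finset.mem_coe, Finset.mem_powersetCard]
    constructor
    · intro x hx
      simp only [Finset.mem_sdiff] at hx
      simpa using hx.2
    · rw [Finset.card_sdiff_of_subset hT.2, hT.1]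
  · intro U hU
    rw [Finset.mem_coe, Finset.mem_powersetCard] at hU
    have hdisj : Disjoint U S := by
      rw [Finset.disjoint_left]
      intro x hx hxS
      have := hU.1 hx
      simp at this
      exact this hxS
    simp only [mem_coe, mem_filter, mem_univ, true_and]
    refine ⟨?_, Finset.subset_union_right⟩
    rw [Finset.card_union_of_disjoint hdisj, hU.2, Nat.sub_add_cancel hS]
  · intro T hT
    simp only [mem_coe, mem_filter, mem_univ, true_and] at hT
    exact Finset.sdiff_union_of_subset hT.2
  · intro U hU
    rw [Finset.mem_coe, Finset.mem_powersetCard] at hU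
    have hdisj : Disjoint U S := by
      rw [Finset.disjoint_left]
      intro x hx hxS
      have := hU.1 hx
      simp at this
      exact this hxS
    show (U ∪ S) \ S = U
    rw [Finset.union_sdiff_right, Finset.sdiff_eq_self_of_disjoint hdisj]

lemma sphere_card_aux (n d : ℕ) (k : Fin n → Bool) :
    (Finset.univ.filter (fun z : Fin n → Bool => hammingDist z k = d)).card = n.choose d := by
  have : n.choose d = ((Finset.univ : Finset (Fin n)).powersetCard d).card := by
    rw [Finset.card_powersetCard, Finset.card_fin]
  rw [this]
  refine Finset.card_nbij' (fun z => Finset.univ.filter (fun i => z i ≠ k i))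
    (fun S => fun i => if i ∈ S then !(k i) else k i) ?_ ?_ ?_ ?_
  · intro z hz
    simp only [mem_coe, mem_filter, mem_univ, true_and] at hz
    rw [Finset.mem_coe, Finset.mem_powersetCard]
    exact ⟨Finset.subset_univ _, hz⟩
  · intro S hS
    rw [Finset.mem_coe, Finset.mem_powersetCard] at hS
    simp only [mem_coe, mem_filter, mem_univ, true_and]
    have : hammingDist (fun i => if i ∈ S then !(k i) else k i) k
        = (Finset.univ.filter (fun i => (if i ∈ S then !(k i) else k i) ≠ k i)).card := rfl
    rw [this, show (Finset.univ.filter (fun i => (if i ∈ S then !(k i) else k i) ≠ k i)) = S by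
      ext i; by_cases h : i ∈ S <;> simp [h]]
    exact hS.2
  · intro z _
    funext i
    by_cases h : z i = k i <;>
      cases hzi : z i <;> cases hki : k i <;> simp_all
  · intro S hS
    ext i
    by_cases h : i ∈ S <;> simp [h]

theorem uniform_sampling_mixed_second_moment (n : ℕ) (hn : 1 ≤ n) (k : Fin n → Bool)
    (d₁ d₂ t : ℕ) (hd₁ : 1 ≤ d₁) (hd₁n : d₁ ≤ n) (hd₂ : 1 ≤ d₂) (hd₂n : d₂ ≤ n)
    (hne : d₁ ≠ d₂) (ht : 3 ≤ t) :
    (∑ T ∈ Finset.univ.filter (fun T : Finset (Fin n → Bool) => T.card = t ∧ k ∈ T),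
        (T.filter (fun z => hammingDist z k = d₁)).card *
          (T.filter (fun z => hammingDist z k = d₂)).card) =
      n.choose d₁ * n.choose d₂ * (2 ^ n - 3).choose (t - 3) := by
  classical
  set A := Finset.univ.filter (fun z : Fin n → Bool => hammingDist z k = d₁) with hA
  set B := Finset.univ.filter (fun z : Fin n → Bool => hammingDist z k = d₂) with hB
  set S := Finset.univ.filter (fun T : Finset (Fin n → Bool) => T.card = t ∧ k ∈ T) with hS
  have step1 : ∀ T : Finset (Fin n → Bool),
      (T.filter (fun z => hammingDist z k = d₁)).card *
        (T.filter (fun z => hammingDist z k = d₂)).card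
      = ∑ a ∈ A, ∑ b ∈ B, (if a ∈ T ∧ b ∈ T then 1 else 0) := by
    intro T
    have h1 : (T.filter (fun z => hammingDist z k = d₁)).card
        = ∑ a ∈ A, (if a ∈ T then 1 else 0) := by
      rw [← Finset.card_filter]
      congr 1
      ext z; simp [hA, and_comm]
    have h2 : (T.filter (fun z => hammingDist z k = d₂)).card
        = ∑ b ∈ B, (if b ∈ T then 1 else 0) := by
      rw [← Finset.card_filter]
      congr 1
      ext z; simp [hB, and_comm]
    rw [h1, h2, Finset.sum_mul_sum]
    refine Finset.sum_congr rfl fun a _ => Finset.sum_congr rfl fun b _ => ?_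
    by_cases ha : a ∈ T <;> by_cases hb : b ∈ T <;> simp [ha, hb]
  calc (∑ T ∈ S, (T.filter (fun z => hammingDist z k = d₁)).card *
          (T.filter (fun z => hammingDist z k = d₂)).card)
      = ∑ T ∈ S, ∑ a ∈ A, ∑ b ∈ B, (if a ∈ T ∧ b ∈ T then 1 else 0) :=
        Finset.sum_congr rfl fun T _ => step1 T
    _ = ∑ a ∈ A, ∑ b ∈ B, ∑ T ∈ S, (if a ∈ T ∧ b ∈ T then 1 else 0) := by
        rw [Finset.sum_comm]
        exact Finset.sum_congr rfl fun a _ => Finset.sum_comm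
    _ = ∑ a ∈ A, ∑ b ∈ B, (2 ^ n - 3).choose (t - 3) := by
        refine Finset.sum_congr rfl fun a ha => Finset.sum_congr rfl fun b hb => ?_
        simp only [hA, mem_filter, mem_univ, true_and] at ha
        simp only [hB, mem_filter, mem_univ, true_and] at hb
        have hak : a ≠ k := by
          intro h; rw [h, hammingDist_self] at ha; omega
        have hbk : b ≠ k := by
          intro h; rw [h, hammingDist_self] at hb; omega
        have hab : a ≠ b := by
          intro h; rw [h, hb] at ha; exact hne ha.symm
        have hcard3 : ({k, a, b} : Finset (Fin n → Bool)).card = 3 := by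
          rw [Finset.card_insert_of_notMem (by simp [Ne.symm hak, Ne.symm hbk]),
            Finset.card_insert_of_notMem (by simp [hab]), Finset.card_singleton]
        have := card_filter_superset_aux ({k, a, b} : Finset (Fin n → Bool)) t
          (by rw [hcard3]; exact ht)
        rw [hcard3] at this
        have hcardα : Fintype.card (Fin n → Bool) = 2 ^ n := by
          simp [Fintype.card_fun]
        rw [hcardα] at this
        rw [← this]
        have heq : (Finset.univ.filter
              (fun T : Finset (Fin n → Bool) => T.card = t ∧ ({k, a, b} : Finset _) ⊆ T))
            = S.filter (fun T => a ∈ T ∧ b ∈ T) := by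
          rw [hS, Finset.filter_filter]
          ext T
          simp only [mem_filter, mem_univ, true_and, Finset.insert_subset_iff,
            Finset.singleton_subset_iff]
          tauto
        rw [heq, Finset.card_filter]
    _ = n.choose d₁ * n.choose d₂ * (2 ^ n - 3).choose (t - 3) := by
        rw [Finset.sum_const, Finset.sum_const, smul_eq_mul, smul_eq_mul, ← mul_assoc]
        simp only [hA, hB, sphere_card_aux]
  rfl
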